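/- arXiv:2012.06931 — 2 statements merged into one kernel-verified Lean document; each statement's English description precedes it below -/
import Mathlib

section
/- On the trefoil braid variety X = {(z₁,z₂,z₃,z₄) ∈ ℂ⁴ : 1 + z₁z₂ + z₄(z₁ + z₃ + z₁z₂z₃) = 0}, the function z₁ + z₃ + z₁z₂z₃ never vanishes; consequently X is isomorphic (as a set, via forgetting z₄) to the open set {(z₁,z₂,z₃) ∈ ℂ³ : z₁ + z₃ + z₁z₂z₃ ≠ 0}. -/
lemma trefoil_key (z₁ z₂ z₃ z₄ : ℂ)
    (h : 1 + z₁ * z₂ + z₄ * (z₁ + z₃ + z₁ * z₂ * z₃) = 0) :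
    z₁ + z₃ + z₁ * z₂ * z₃ ≠ 0 := by
  intro hd
  rw [hd, mul_zero, add_zero] at h
  have hz1 : z₁ = 0 := by
    have : z₁ + z₃ * (1 + z₁ * z₂) = 0 := by linear_combination hd
    rw [h] at this; simpa using this
  rw [hz1] at h; simpa using h

/-- On the trefoil braid variety `X = {1 + z₁z₂ + z₄(z₁ + z₃ + z₁z₂z₃) = 0} ⊆ ℂ⁴`,
the function `z₁ + z₃ + z₁z₂z₃` never vanishes, and forgetting `z₄` gives a bijection
of `X` onto the open set `{(z₁,z₂,z₃) : z₁ + z₃ + z₁z₂z₃ ≠ 0} ⊆ ℂ³`. -/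
theorem trefoil_braid_variety_open_chart :
    (∀ z₁ z₂ z₃ z₄ : ℂ, 1 + z₁ * z₂ + z₄ * (z₁ + z₃ + z₁ * z₂ * z₃) = 0 →
      z₁ + z₃ + z₁ * z₂ * z₃ ≠ 0) ∧
    Set.BijOn (fun p : ℂ × ℂ × ℂ × ℂ => (p.1, p.2.1, p.2.2.1))
      {p : ℂ × ℂ × ℂ × ℂ |
        1 + p.1 * p.2.1 + p.2.2.2 * (p.1 + p.2.2.1 + p.1 * p.2.1 * p.2.2.1) = 0}
      {q : ℂ × ℂ × ℂ | q.1 + q.2.2 + q.1 * q.2.1 * q.2.2 ≠ 0} := by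
  refine ⟨trefoil_key, ?_, ?_, ?_⟩
  · rintro ⟨z₁, z₂, z₃, z₄⟩ h
    exact trefoil_key z₁ z₂ z₃ z₄ h
  · rintro ⟨a₁, a₂, a₃, a₄⟩ ha ⟨b₁, b₂, b₃, b₄⟩ hb heq
    simp only [Prod.mk.injEq] at heq
    obtain ⟨h1, h2, h3⟩ := heq
    subst h1; subst h2; subst h3
    have hd := trefoil_key a₁ a₂ a₃ a₄ ha
    simp only [Set.mem_setOf_eq] at ha hb
    have h0 : (a₄ - b₄) * (a₁ + a₃ + a₁ * a₂ * a₃) = 0 := by linear_combination ha - hb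
    rcases mul_eq_zero.mp h0 with h | h
    · rw [sub_eq_zero.mp h]
    · exact absurd h hd
  · rintro ⟨q₁, q₂, q₃⟩ hq
    simp only [Set.mem_setOf_eq] at hq
    refine ⟨(q₁, q₂, q₃, -(1 + q₁ * q₂) / (q₁ + q₃ + q₁ * q₂ * q₃)), ?_, rfl⟩
    simp only [Set.mem_setOf_eq]
    field_simp
    ring
end

section
/- The 1212-relation for variable changes: applying to (z₁,z₂,z₃,z₄) the sequence 1212→2122→212→121 gives (z₄ + z₁⁻¹, z₃ + z₂z₄, z₂), and the sequence 1212→1121→121 gives the same tuple (z₄ + z₁⁻¹, z₃ + z₂z₄, z₂), assuming z₁ is invertible. -/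
variable {R : Type*} [CommRing R]

/-- Braid move `(a,b,c,d) ↦ (c, b - a*c, a, d)` on the first three positions (`1212 → 2122`). -/
def brA : R × R × R × R → R × R × R × R
  | (a, b, c, d) => (c, b - a * c, a, d)

/-- Opening the crossing at position 3 (whose variable `c` has inverse `cinv`), sliding the
triangular matrices: `(a,b,c,d) ↦ (b + a*c, a - (b + a*c)*c⁻¹, d + c⁻¹)` (`2122 → 212`). -/
def slideTri : R × R × R × R → R → R × R × R
  | (a, b, c, d), cinv => (b + a * c, a - (b + a * c) * cinv, d + cinv)

/-- Inverse braid move `(a,b,c) ↦ (c, b + a*c, a)` (`212 → 121`). -/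
def ibr : R × R × R → R × R × R
  | (a, b, c) => (c, b + a * c, a)

/-- Inverse braid move on the last three positions `(a,b,c,d) ↦ (a, d, c + b*d, b)`
(`1212 → 1121`). -/
def ibrB : R × R × R × R → R × R × R × R
  | (a, b, c, d) => (a, d, c + b * d, b)

/-- Trivalent-vertex move merging positions 1,2 (with `ainv` the inverse of the first
variable): `(a,b,c,d) ↦ (b + a⁻¹, c, d)` (`1121 → 121`). -/
def triA : R × R × R × R → R → R × R × R
  | (_, b, c, d), ainv => (b + ainv, c, d)

/-- The 1212-relation for variable changes: the path `1212 → 2122 → 212 → 121` and the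
path `1212 → 1121 → 121` applied to `(z₁,z₂,z₃,z₄)` both yield
`(z₄ + z₁⁻¹, z₃ + z₂z₄, z₂)`, assuming `z₁` is invertible. -/
theorem relation_1212 (z₁ z₂ z₃ z₄ : R) [Invertible z₁] :
    ibr (slideTri (brA (z₁, z₂, z₃, z₄)) (⅟z₁)) =
      triA (ibrB (z₁, z₂, z₃, z₄)) (⅟z₁) ∧
    ibr (slideTri (brA (z₁, z₂, z₃, z₄)) (⅟z₁)) =
      (z₄ + ⅟z₁, z₃ + z₂ * z₄, z₂) := by
  simp only [brA, slideTri, ibr, ibrB, triA, Prod.mk.injEq]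
  constructor <;> exact ⟨trivial, by ring, by ring⟩
end
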